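/- Let u : ℝ³ → ℝ be a C² function with u ≥ 0 and ω ∈ ℝ such that −Δu + F′(u) = ω²u on ℝ³. Let v ∈ ℝ with |v| < 1, γ = 1/√(1−v²), ω̄ = γω and k = γωv. Then the function ψ_v(t, x₁, x₂, x₃) := u(γ(x₁ − v t), x₂, x₃) · e^{i(k x₁ − ω̄ t)} is a solution of the nonlinear Klein–Gordon equation ∂²ψ/∂t² − Δ_xψ + W′(ψ) = 0 on ℝ × ℝ³. -/

import Mathlib

noncomputable section

/-- Partial derivative in the `i`-th coordinate direction (complex valued). -/
def pderivC {n : ℕ} (i : Fin n) (f : (Fin n → ℝ) → ℂ) (x : Fin n → ℝ) : ℂ :=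
  deriv (fun r => f (Function.update x i r)) (x i)

/-- Laplacian in the space variables (complex valued). -/
def lapC {n : ℕ} (f : (Fin n → ℝ) → ℂ) (x : Fin n → ℝ) : ℂ :=
  ∑ i, pderivC i (fun y => pderivC i f y) x

/-- Partial derivative in the `i`-th coordinate direction (real valued). -/
def pderivR {n : ℕ} (i : Fin n) (f : (Fin n → ℝ) → ℝ) (x : Fin n → ℝ) : ℝ :=
  deriv (fun r => f (Function.update x i r)) (x i)

/-- Laplacian in the space variables (real valued). -/
def lapR {n : ℕ} (f : (Fin n → ℝ) → ℝ) (x : Fin n → ℝ) : ℝ :=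
  ∑ i, pderivR i (fun y => pderivR i f y) x

/-- Second time derivative of `ψ : ℝ → (Fin n → ℝ) → ℂ`. -/
def dtt {n : ℕ} (ψ : ℝ → (Fin n → ℝ) → ℂ) (t : ℝ) (x : Fin n → ℝ) : ℂ :=
  deriv (fun s => deriv (fun s' => ψ s' x) s) t

/-- `W'(z) = F'(|z|) z / |z|` for `z ≠ 0`, and `W'(0) = 0`. -/
def Wderiv (F : ℝ → ℝ) (z : ℂ) : ℂ :=
  if z = 0 then 0 else ((deriv F ‖z‖ : ℝ) : ℂ) * z / (‖z‖ : ℂ)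

/-- `ψ` is a solution of the nonlinear Klein–Gordon equation
`∂ₜₜψ − Δψ + W′(ψ) = 0`. -/
def IsNKGSolution {n : ℕ} (F : ℝ → ℝ) (ψ : ℝ → (Fin n → ℝ) → ℂ) : Prop :=
  ∀ (t : ℝ) (x : Fin n → ℝ), dtt ψ t x - lapC (ψ t) x + Wderiv F (ψ t x) = 0

/-- First derivative of `s ↦ φ(A+Bs) e^{p+qs}`. -/
lemma gen1 (φ : ℝ → ℝ) (hφ : ContDiff ℝ 2 φ) (A B : ℝ) (p q : ℂ) (s : ℝ) :
    HasDerivAt (fun s' : ℝ => ((φ (A + B * s') : ℝ) : ℂ) * Complex.exp (p + q * s'))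
      (((deriv φ (A + B * s) * B : ℝ) : ℂ) * Complex.exp (p + q * s)
        + ((φ (A + B * s) : ℝ) : ℂ) * (Complex.exp (p + q * s) * q)) s := by
  have hA : HasDerivAt (fun s' : ℝ => A + B * s') B s := by
    simpa using ((hasDerivAt_id s).const_mul B).const_add A
  have hφ' : HasDerivAt φ (deriv φ (A + B * s)) (A + B * s) :=
    ((hφ.differentiable (by norm_num)) (A + B * s)).hasDerivAt
  have h1 : HasDerivAt (fun s' : ℝ => ((φ (A + B * s') : ℝ) : ℂ))
      ((deriv φ (A + B * s) * B : ℝ) : ℂ) s := (hφ'.comp s hA).ofReal_comp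
  have hq : HasDerivAt (fun s' : ℝ => p + q * (s' : ℂ)) q s := by
    have hs : HasDerivAt (fun s' : ℝ => ((s' : ℝ) : ℂ)) 1 s := by
      simpa using (hasDerivAt_id s).ofReal_comp
    simpa using (hs.const_mul q).const_add p
  have hE := hq.cexp
  exact h1.mul hE

/-- Second derivative of `s ↦ φ(A+Bs) e^{p+qs}`. -/
lemma gen2 (φ : ℝ → ℝ) (hφ : ContDiff ℝ 2 φ) (A B : ℝ) (p q : ℂ) (t : ℝ) :
    deriv (deriv (fun s : ℝ => ((φ (A + B * s) : ℝ) : ℂ) * Complex.exp (p + q * s))) t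
      = Complex.exp (p + q * t) *
        (((B * B * deriv (deriv φ) (A + B * t) : ℝ) : ℂ)
          + 2 * q * ((B * deriv φ (A + B * t) : ℝ) : ℂ)
          + q * q * ((φ (A + B * t) : ℝ) : ℂ)) := by
  have hA : HasDerivAt (fun s' : ℝ => A + B * s') B t := by
    simpa using ((hasDerivAt_id t).const_mul B).const_add A
  have hd : (deriv (fun s : ℝ => ((φ (A + B * s) : ℝ) : ℂ) * Complex.exp (p + q * s)))
      = fun s => ((deriv φ (A + B * s) * B : ℝ) : ℂ) * Complex.exp (p + q * s)
        + ((φ (A + B * s) : ℝ) : ℂ) * (Complex.exp (p + q * s) * q) :=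
    funext fun s => (gen1 φ hφ A B p q s).deriv
  rw [hd]
  have hφ2 : ContDiff ℝ 1 (deriv φ) := by
    have h2 : ContDiff ℝ (1 + 1) φ := by exact_mod_cast hφ
    exact (contDiff_succ_iff_deriv.mp h2).2.2
  have hdd : HasDerivAt (deriv φ) (deriv (deriv φ) (A + B * t)) (A + B * t) :=
    ((hφ2.differentiable one_ne_zero) (A + B * t)).hasDerivAt
  have hφ' : HasDerivAt φ (deriv φ (A + B * t)) (A + B * t) :=
    ((hφ.differentiable (by norm_num)) (A + B * t)).hasDerivAt
  have hq : HasDerivAt (fun s' : ℝ => p + q * (s' : ℂ)) q t := by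
    have hs : HasDerivAt (fun s' : ℝ => ((s' : ℝ) : ℂ)) 1 t := by
      simpa using (hasDerivAt_id t).ofReal_comp
    simpa using (hs.const_mul q).const_add p
  have hE := hq.cexp
  have h1 : HasDerivAt (fun s' : ℝ => ((φ (A + B * s') : ℝ) : ℂ))
      ((deriv φ (A + B * t) * B : ℝ) : ℂ) t := (hφ'.comp t hA).ofReal_comp
  have hterm1 : HasDerivAt (fun s : ℝ => ((deriv φ (A + B * s) * B : ℝ) : ℂ))
      ((deriv (deriv φ) (A + B * t) * B * B : ℝ) : ℂ) t := by
    have := ((hdd.comp t hA).mul_const B).ofReal_comp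
    simpa using this
  have := (hterm1.mul hE).add (h1.mul (hE.mul_const q))
  rw [(show HasDerivAt (fun s : ℝ => ((deriv φ (A + B * s) * B : ℝ) : ℂ) * Complex.exp (p + q * s)
      + ((φ (A + B * s) : ℝ) : ℂ) * (Complex.exp (p + q * s) * q)) _ t from this).deriv]
  push_cast
  ring

/-- From a standing wave profile `u` (a nonnegative `C²`
solution of `−Δu + F′(u) = ω²u`) one obtains, after a Lorentz boost with
velocity `v`, a travelling solitary wave solution
`ψ_v(t,x) = u(γ(x₁−vt),x₂,x₃) e^{i(kx₁−ω̄t)}` of the nonlinear Klein–Gordon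
equation, where `γ = 1/√(1−v²)`, `ω̄ = γω`, `k = γωv`. -/
theorem travelling_wave_solution (F : ℝ → ℝ) (hF : ContDiff ℝ 2 F)
    (hF'0 : deriv F 0 = 0)
    (u : (Fin 3 → ℝ) → ℝ) (hu : ContDiff ℝ 2 u) (hupos : ∀ x, 0 ≤ u x)
    (ω : ℝ)
    (hsol : ∀ x, -lapR u x + deriv F (u x) = ω ^ 2 * u x)
    (v : ℝ) (hv : |v| < 1) :
    IsNKGSolution F (fun t x =>
      ((u (Function.update x 0 ((1 / Real.sqrt (1 - v ^ 2)) * (x 0 - v * t))) : ℝ) : ℂ) *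
        Complex.exp (Complex.I *
          ((((1 / Real.sqrt (1 - v ^ 2)) * ω * v : ℝ) : ℂ) * ((x 0 : ℝ) : ℂ) -
            (((1 / Real.sqrt (1 - v ^ 2)) * ω : ℝ) : ℂ) * ((t : ℝ) : ℂ)))) := by
  intro t x
  have hv2 : (0:ℝ) < 1 - v ^ 2 := by
    have h := abs_lt.mp hv; nlinarith
  set γ : ℝ := 1 / Real.sqrt (1 - v ^ 2) with hγdef
  have hγ2 : γ ^ 2 * (1 - v ^ 2) = 1 := by
    rw [hγdef, div_pow, one_pow, Real.sq_sqrt hv2.le]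
    field_simp
  set kR : ℝ := γ * ω * v with hkR
  set wR : ℝ := γ * ω with hwR
  set ψ : ℝ → (Fin 3 → ℝ) → ℂ := fun t x =>
      ((u (Function.update x 0 (γ * (x 0 - v * t))) : ℝ) : ℂ) *
        Complex.exp (Complex.I * (((kR : ℝ) : ℂ) * ((x 0 : ℝ) : ℂ) -
          ((wR : ℝ) : ℂ) * ((t : ℝ) : ℂ))) with hψ
  set c : ℝ := γ * (x 0 - v * t) with hc
  set Y : Fin 3 → ℝ := Function.update x 0 c with hY
  set w : Fin 3 → ℝ → ℝ := fun i r => u (Function.update Y i r) with hwdef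
  have hwC : ∀ i, ContDiff ℝ 2 (w i) := fun i => hu.comp (contDiff_update 2 Y i)
  set E : ℂ := Complex.exp (Complex.I * (((kR : ℝ) : ℂ) * ((x 0 : ℝ) : ℂ) -
      ((wR : ℝ) : ℂ) * ((t : ℝ) : ℂ))) with hE
  have hupdY : ∀ r : ℝ, Function.update Y 0 r = Function.update x 0 r := by
    intro r; rw [hY, Function.update_idem]
  have hw0 : ∀ r : ℝ, w 0 r = u (Function.update x 0 r) := by
    intro r; rw [hwdef]; simp only; rw [hupdY]
  -- ========== time derivative ==========
  have Hdtt : dtt ψ t x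
      = E * (((-(γ * v) * -(γ * v) * deriv (deriv (w 0)) c : ℝ) : ℂ)
          + 2 * (-(Complex.I * ((wR : ℝ) : ℂ))) * ((-(γ * v) * deriv (w 0) c : ℝ) : ℂ)
          + (-(Complex.I * ((wR : ℝ) : ℂ))) * (-(Complex.I * ((wR : ℝ) : ℂ)))
              * ((w 0 c : ℝ) : ℂ)) := by
    have e1 : (fun s' : ℝ => ψ s' x)
        = (fun s' : ℝ => ((w 0 (γ * x 0 + -(γ * v) * s') : ℝ) : ℂ) *
            Complex.exp ((Complex.I * ((kR : ℝ) : ℂ) * ((x 0 : ℝ) : ℂ))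
              + (-(Complex.I * ((wR : ℝ) : ℂ))) * ((s' : ℝ) : ℂ))) := by
      funext s
      simp only [hψ]
      have h1 : γ * x 0 + -(γ * v) * s = γ * (x 0 - v * s) := by ring
      rw [hw0, h1]
      congr 1
      ring
    simp only [dtt]
    rw [e1, gen2 (w 0) (hwC 0) (γ * x 0) (-(γ * v))
      (Complex.I * ((kR : ℝ) : ℂ) * ((x 0 : ℝ) : ℂ)) (-(Complex.I * ((wR : ℝ) : ℂ))) t]
    have harg : γ * x 0 + -(γ * v) * t = c := by rw [hc]; ring
    have hexp : (Complex.I * ((kR : ℝ) : ℂ) * ((x 0 : ℝ) : ℂ))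
        + (-(Complex.I * ((wR : ℝ) : ℂ))) * ((t : ℝ) : ℂ)
        = Complex.I * (((kR : ℝ) : ℂ) * ((x 0 : ℝ) : ℂ) - ((wR : ℝ) : ℂ) * ((t : ℝ) : ℂ)) := by
      ring
    rw [harg, hexp, ← hE]
  -- ========== space derivative, coordinate 0 ==========
  have H0 : pderivC 0 (fun y => pderivC 0 (ψ t) y) x
      = E * (((γ * γ * deriv (deriv (w 0)) c : ℝ) : ℂ)
          + 2 * (Complex.I * ((kR : ℝ) : ℂ)) * ((γ * deriv (w 0) c : ℝ) : ℂ)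
          + (Complex.I * ((kR : ℝ) : ℂ)) * (Complex.I * ((kR : ℝ) : ℂ))
              * ((w 0 c : ℝ) : ℂ)) := by
    have einner : (fun r' : ℝ => ψ t (Function.update x 0 r'))
        = (fun r' : ℝ => ((w 0 (-(γ * (v * t)) + γ * r') : ℝ) : ℂ) *
            Complex.exp ((-(Complex.I * ((wR : ℝ) : ℂ) * ((t : ℝ) : ℂ)))
              + (Complex.I * ((kR : ℝ) : ℂ)) * ((r' : ℝ) : ℂ))) := by
      funext r'
      simp only [hψ, Function.update_self, Function.update_idem]
      have h1 : -(γ * (v * t)) + γ * r' = γ * (r' - v * t) := by ring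
      rw [hw0, h1]
      congr 1
      ring
    have eslice : (fun r : ℝ => pderivC 0 (ψ t) (Function.update x 0 r))
        = deriv (fun r' : ℝ => ((w 0 (-(γ * (v * t)) + γ * r') : ℝ) : ℂ) *
            Complex.exp ((-(Complex.I * ((wR : ℝ) : ℂ) * ((t : ℝ) : ℂ)))
              + (Complex.I * ((kR : ℝ) : ℂ)) * ((r' : ℝ) : ℂ))) := by
      funext r
      simp only [pderivC, Function.update_idem, Function.update_self]
      rw [einner]
    have h0 : pderivC 0 (fun y => pderivC 0 (ψ t) y) x
        = deriv (fun r => pderivC 0 (ψ t) (Function.update x 0 r)) (x 0) := rfl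
    rw [h0, eslice, gen2 (w 0) (hwC 0) (-(γ * (v * t))) γ
      (-(Complex.I * ((wR : ℝ) : ℂ) * ((t : ℝ) : ℂ))) (Complex.I * ((kR : ℝ) : ℂ)) (x 0)]
    have harg : -(γ * (v * t)) + γ * x 0 = c := by rw [hc]; ring
    have hexp : (-(Complex.I * ((wR : ℝ) : ℂ) * ((t : ℝ) : ℂ)))
        + (Complex.I * ((kR : ℝ) : ℂ)) * ((x 0 : ℝ) : ℂ)
        = Complex.I * (((kR : ℝ) : ℂ) * ((x 0 : ℝ) : ℂ) - ((wR : ℝ) : ℂ) * ((t : ℝ) : ℂ)) := by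
      ring
    rw [harg, hexp, ← hE]
  -- ========== space derivatives, coordinates 1 and 2 ==========
  have Hside : ∀ i : Fin 3, i ≠ 0 →
      pderivC i (fun y => pderivC i (ψ t) y) x
        = E * ((deriv (deriv (w i)) (x i) : ℝ) : ℂ) := by
    intro i hi
    have einner : (fun r' : ℝ => ψ t (Function.update x i r'))
        = (fun r' : ℝ => ((w i (0 + 1 * r') : ℝ) : ℂ) *
            Complex.exp ((Complex.I * (((kR : ℝ) : ℂ) * ((x 0 : ℝ) : ℂ) -
              ((wR : ℝ) : ℂ) * ((t : ℝ) : ℂ))) + 0 * ((r' : ℝ) : ℂ))) := by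
      funext r'
      simp only [hψ]
      rw [Function.update_of_ne (Ne.symm hi)]
      rw [← hc]
      rw [Function.update_comm hi]
      rw [← hY]
      have h1 : (0 : ℝ) + 1 * r' = r' := by ring
      rw [h1, hwdef]
      simp only
      congr 1
      ring
    have eslice : (fun r : ℝ => pderivC i (ψ t) (Function.update x i r))
        = deriv (fun r' : ℝ => ((w i (0 + 1 * r') : ℝ) : ℂ) *
            Complex.exp ((Complex.I * (((kR : ℝ) : ℂ) * ((x 0 : ℝ) : ℂ) -
              ((wR : ℝ) : ℂ) * ((t : ℝ) : ℂ))) + 0 * ((r' : ℝ) : ℂ))) := by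
      funext r
      simp only [pderivC, Function.update_idem, Function.update_self]
      rw [einner]
    have h0 : pderivC i (fun y => pderivC i (ψ t) y) x
        = deriv (fun r => pderivC i (ψ t) (Function.update x i r)) (x i) := rfl
    rw [h0, eslice, gen2 (w i) (hwC i) 0 1
      (Complex.I * (((kR : ℝ) : ℂ) * ((x 0 : ℝ) : ℂ) -
        ((wR : ℝ) : ℂ) * ((t : ℝ) : ℂ))) 0 (x i)]
    have harg : (0 : ℝ) + 1 * x i = x i := by ring
    have hexp : (Complex.I * (((kR : ℝ) : ℂ) * ((x 0 : ℝ) : ℂ) -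
        ((wR : ℝ) : ℂ) * ((t : ℝ) : ℂ))) + 0 * ((x i : ℝ) : ℂ)
        = Complex.I * (((kR : ℝ) : ℂ) * ((x 0 : ℝ) : ℂ) - ((wR : ℝ) : ℂ) * ((t : ℝ) : ℂ)) := by
      ring
    rw [harg, hexp, ← hE]
    push_cast
    ring
  -- ========== the Laplacian ==========
  have Hlap : lapC (ψ t) x
      = E * (((γ * γ * deriv (deriv (w 0)) c : ℝ) : ℂ)
          + 2 * (Complex.I * ((kR : ℝ) : ℂ)) * ((γ * deriv (w 0) c : ℝ) : ℂ)
          + (Complex.I * ((kR : ℝ) : ℂ)) * (Complex.I * ((kR : ℝ) : ℂ))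
              * ((w 0 c : ℝ) : ℂ))
        + E * ((deriv (deriv (w 1)) (x 1) : ℝ) : ℂ)
        + E * ((deriv (deriv (w 2)) (x 2) : ℝ) : ℂ) := by
    simp only [lapC, Fin.sum_univ_three]
    rw [H0, Hside 1 (by decide), Hside 2 (by decide)]
  -- ========== real Laplacian of u at Y in terms of slices ==========
  have hslice_r : ∀ i : Fin 3, pderivR i (pderivR i u) Y = deriv (deriv (w i)) (Y i) := by
    intro i
    have h1 : (fun r => pderivR i u (Function.update Y i r)) = deriv (w i) := by
      funext r
      simp only [pderivR, Function.update_idem, Function.update_self]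
      rfl
    have h0 : pderivR i (pderivR i u) Y
        = deriv (fun r => pderivR i u (Function.update Y i r)) (Y i) := rfl
    rw [h0, h1]
  have hY0 : Y 0 = c := by rw [hY]; simp
  have hY1 : Y 1 = x 1 := by rw [hY]; simp [Function.update_of_ne]
  have hY2 : Y 2 = x 2 := by rw [hY]; simp [Function.update_of_ne]
  have hlapR : lapR u Y = deriv (deriv (w 0)) c + deriv (deriv (w 1)) (x 1)
      + deriv (deriv (w 2)) (x 2) := by
    simp only [lapR, Fin.sum_univ_three]
    rw [hslice_r 0, hslice_r 1, hslice_r 2, hY0, hY1, hY2]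
  have hw0c : w 0 c = u Y := by rw [hw0 c, ← hY]
  -- ========== the nonlinear term ==========
  have hψtx : ψ t x = ((u Y : ℝ) : ℂ) * E := by
    simp only [hψ]
    rfl
  have habsE : ‖E‖ = 1 := by
    rw [hE]
    simp [Complex.norm_exp]
  have HW : Wderiv F (ψ t x) = ((deriv F (u Y) : ℝ) : ℂ) * E := by
    rw [hψtx]
    by_cases h : u Y = 0
    · simp [Wderiv, h, hF'0]
    · have hu0 : ((u Y : ℝ) : ℂ) ≠ 0 := Complex.ofReal_ne_zero.mpr h
      have hE0 : E ≠ 0 := by rw [hE]; exact Complex.exp_ne_zero _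
      have hne : ((u Y : ℝ) : ℂ) * E ≠ 0 := mul_ne_zero hu0 hE0
      rw [Wderiv, if_neg hne]
      have habs : ‖((u Y : ℝ) : ℂ) * E‖ = u Y := by
        rw [norm_mul, habsE, Complex.norm_real, Real.norm_eq_abs, _root_.abs_of_nonneg (hupos Y), mul_one]
      rw [habs]
      field_simp
  -- ========== conclusion ==========
  rw [Hdtt, Hlap, HW]
  rw [hw0c]
  have hs2 := hsol Y
  rw [hlapR] at hs2
  have hsC := congrArg (fun r : ℝ => (r : ℂ)) hs2
  have hγ2C := congrArg (fun r : ℝ => (r : ℂ)) hγ2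
  push_cast at hsC hγ2C ⊢
  rw [hkR, hwR] at *
  push_cast
  linear_combination E * hsC
    + (-(E * (((deriv (deriv (w 0)) c : ℝ) : ℂ) + ((ω : ℝ) : ℂ) ^ 2 * ((u Y : ℝ) : ℂ))))
      * hγ2C
    + (E * ((γ : ℝ) : ℂ) ^ 2 * ((ω : ℝ) : ℂ) ^ 2 * (1 - ((v : ℝ) : ℂ) ^ 2)
        * ((u Y : ℝ) : ℂ)) * Complex.I_sq
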